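/- Let C ∈ ℂ^{2×2} be diagonalizable with eigenvalues λ₁, λ₂ satisfying Re λ₁ < Re λ₂ and Im λ₁ = Im λ₂, with normalized eigenvectors v₁, v₂, and α = |⟨v₁, v₂⟩| ∈ (0,1). If w₁ is the normalized eigenvector of C* with C*w₁ = conj(λ₁) w₁ and ⟨w₁, v₂⟩ = 0 normalization ⟨w₁, v₁⟩ real positive, then the solution f of f' = −Cf with f(0) = w₁ satisfies lim_{t→∞} e^{Re λ₁ t} ‖f(t)‖₂ / ‖f(0)‖₂ = 1/√(1−α²). -/

import Mathlib

open Matrix Complex Finset Filter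

private lemma inner_eq_dot' (x y : Fin 2 → ℂ) :
    (inner ℂ ((WithLp.equiv 2 (Fin 2 → ℂ)).symm x) ((WithLp.equiv 2 (Fin 2 → ℂ)).symm y) : ℂ)
      = star x ⬝ᵥ y := by
  simp [PiLp.inner_apply, RCLike.inner_apply, dotProduct, WithLp.equiv_symm_apply, PiLp.toLp_apply, mul_comm]

private lemma norm2_eq' (x : Fin 2 → ℂ) :
    ‖(WithLp.equiv 2 (Fin 2 → ℂ)).symm x‖ = Real.sqrt (∑ i, ‖x i‖ ^ 2) := by
  rw [EuclideanSpace.norm_eq]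
  simp [WithLp.equiv_symm_apply, PiLp.toLp_apply]

private lemma expand_pair' (W V x : EuclideanSpace ℂ (Fin 2)) (hW : ‖W‖ = 1) (hV : ‖V‖ = 1)
    (hWV : (inner ℂ W V : ℂ) = 0) :
    x = (inner ℂ W x : ℂ) • W + (inner ℂ V x : ℂ) • V := by
  have hon : Orthonormal ℂ (![W, V]) := by
    constructor
    · intro i; fin_cases i <;> simpa
    · have h2 : (inner ℂ V W : ℂ) = 0 := by rw [← inner_conj_symm, hWV, map_zero]
      intro i j hij
      fin_cases i <;> fin_cases j <;>
        simp only [Matrix.cons_val_zero, Matrix.cons_val_one, Matrix.head_cons] <;>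
        first | exact absurd rfl hij | exact hWV | exact h2
  have hcard : Fintype.card (Fin 2) = Module.finrank ℂ (EuclideanSpace ℂ (Fin 2)) := by
    simp [finrank_euclideanSpace_fin]
  let b := basisOfLinearIndependentOfCardEqFinrank hon.linearIndependent hcard
  have hb : ⇑b = ![W, V] := coe_basisOfLinearIndependentOfCardEqFinrank _ _
  have hon' : Orthonormal ℂ ⇑b := by rw [hb]; exact hon
  let ob := b.toOrthonormalBasis hon'
  have hob : ⇑ob = ![W, V] := by rw [Module.Basis.coe_toOrthonormalBasis, hb]
  have := ob.sum_repr' x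
  rw [Fin.sum_univ_two, hob] at this
  simpa using this.symm

theorem stmt19 (C : Matrix (Fin 2) (Fin 2) ℂ) (lam1 lam2 : ℂ)
    (v1 v2 w1 : Fin 2 → ℂ) (α : ℝ)
    (hv1 : v1 ≠ 0) (hv2 : v2 ≠ 0)
    (he1 : C.mulVec v1 = lam1 • v1) (he2 : C.mulVec v2 = lam2 • v2)
    (hre : lam1.re < lam2.re) (him : lam1.im = lam2.im)
    (hn1 : Real.sqrt (∑ i, ‖v1 i‖ ^ 2) = 1) (hn2 : Real.sqrt (∑ i, ‖v2 i‖ ^ 2) = 1)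
    (hα : α = ‖star v1 ⬝ᵥ v2‖) (hα0 : 0 < α) (hα1 : α < 1)
    (hw1 : Cᴴ.mulVec w1 = (starRingEnd ℂ) lam1 • w1)
    (hwn : Real.sqrt (∑ i, ‖w1 i‖ ^ 2) = 1)
    (hworth : star w1 ⬝ᵥ v2 = 0)
    (hwre : 0 < (star w1 ⬝ᵥ v1).re ∧ (star w1 ⬝ᵥ v1).im = 0)
    (f : ℝ → Fin 2 → ℂ) (hf : ∀ t : ℝ, HasDerivAt f (-(C.mulVec (f t))) t)
    (hf0 : f 0 = w1) :
    Tendsto (fun t : ℝ =>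
        Real.exp (lam1.re * t) * Real.sqrt (∑ i, ‖f t i‖ ^ 2) /
          Real.sqrt (∑ i, ‖f 0 i‖ ^ 2))
      atTop (nhds (1 / Real.sqrt (1 - α ^ 2))) := by
  classical
  set e := (WithLp.equiv 2 (Fin 2 → ℂ)).symm with he
  set p : ℂ := star w1 ⬝ᵥ v1 with hpdef
  set c : ℂ := star v2 ⬝ᵥ v1 with hcdef
  have hWn : ‖e w1‖ = 1 := by rw [he, norm2_eq']; exact hwn
  have hVn : ‖e v2‖ = 1 := by rw [he, norm2_eq']; exact hn2
  have hV1n : ‖e v1‖ = 1 := by rw [he, norm2_eq']; exact hn1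
  have hWVorth : (inner ℂ (e w1) (e v2) : ℂ) = 0 := by rw [he, inner_eq_dot']; exact hworth
  have hv1exp : e v1 = p • e w1 + c • e v2 := by
    have h := expand_pair' (e w1) (e v2) (e v1) hWn hVn hWVorth
    rw [he, inner_eq_dot', inner_eq_dot'] at h
    exact h
  have hfun : v1 = p • w1 + c • v2 := by
    apply (WithLp.equiv 2 (Fin 2 → ℂ)).symm.injective
    rw [← he, hv1exp, he]
    simp [WithLp.equiv_symm_apply]
  -- Pythagoras
  have hpyth : ‖p‖ ^ 2 + ‖c‖ ^ 2 = 1 := by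
    have h0 : (inner ℂ (p • e w1) (c • e v2) : ℂ) = 0 := by
      rw [inner_smul_left, inner_smul_right, hWVorth]; ring
    have h := norm_add_sq_eq_norm_sq_add_norm_sq_of_inner_eq_zero _ _ h0
    rw [← hv1exp, hV1n] at h
    rw [norm_smul, norm_smul, hWn, hVn] at h
    rw [sq, sq]
    simpa using h.symm
  have hcα : ‖c‖ = α := by
    have hcc : c = (starRingEnd ℂ) (star v1 ⬝ᵥ v2) := by
      simp [hcdef, dotProduct, map_sum, mul_comm]
    rw [hcc, hα, RCLike.norm_conj]
  obtain ⟨hpre, hpim⟩ := hwre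
  have hα2 : (0:ℝ) < 1 - α ^ 2 := by nlinarith
  have hnormp : ‖p‖ = p.re := by
    have hpeq : p = ((p.re : ℝ) : ℂ) := by
      apply Complex.ext <;> simp [hpim]
    rw [hpeq]
    simp [Complex.norm_real, abs_of_pos hpre]
  have hpre2 : p.re ^ 2 = 1 - α ^ 2 := by nlinarith [hpyth, hcα, hnormp]
  have hp1 : p = ((Real.sqrt (1 - α ^ 2) : ℝ) : ℂ) := by
    have hpeq : p = ((p.re : ℝ) : ℂ) := by
      apply Complex.ext <;> simp [hpim]
    rw [hpeq]
    congr 1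
    rw [← hpre2, Real.sqrt_sq hpre.le]
  have hp0 : p ≠ 0 := by
    intro h
    rw [h] at hpre; simp at hpre
  -- expansion of w1
  have hwfun : w1 = p⁻¹ • v1 - (c * p⁻¹) • v2 := by
    have h1 : p • w1 = v1 - c • v2 := by rw [hfun]; module
    calc w1 = p⁻¹ • (p • w1) := (inv_smul_smul₀ hp0 w1).symm
    _ = p⁻¹ • (v1 - c • v2) := by rw [h1]
    _ = p⁻¹ • v1 - (c * p⁻¹) • v2 := by module
  -- the explicit solution
  set g : ℝ → Fin 2 → ℂ := fun t => (p⁻¹ * Complex.exp (-(lam1 * t))) • v1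
      - (c * p⁻¹ * Complex.exp (-(lam2 * t))) • v2 with hgdef
  have hg0 : g 0 = w1 := by
    rw [hwfun, hgdef]; simp
  have hgd : ∀ t₀ : ℝ, HasDerivAt g (-(C.mulVec (g t₀))) t₀ := by
    intro t₀
    have hde : ∀ lam : ℂ, HasDerivAt (fun t : ℝ => Complex.exp (-(lam * t)))
        (Complex.exp (-(lam * t₀)) * -lam) t₀ := by
      intro lam
      have h1 : HasDerivAt (fun t : ℝ => -(lam * (t : ℂ))) (-lam) t₀ := by
        convert ((Complex.ofRealCLM.hasDerivAt (x := t₀)).const_mul lam).neg using 1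
        · rfl
        · rfl
        · simp
      exact h1.cexp
    have H := ((((hde lam1).const_mul p⁻¹).smul_const v1).sub
      (((hde lam2).const_mul (c * p⁻¹)).smul_const v2))
    convert H using 1
    · rfl
    · rfl
    · rfl
    · rfl
    rw [hgdef]
    rw [Matrix.mulVec_sub, Matrix.mulVec_smul, Matrix.mulVec_smul, he1, he2]
    module
  -- uniqueness
  have hfg : ∀ t : ℝ, 0 ≤ t → f t = g t := by
    intro T hT
    set φ : (Fin 2 → ℂ) →L[ℂ] (Fin 2 → ℂ) :=
      LinearMap.toContinuousLinearMap (-(C.mulVecLin)) with hφ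
    have hφapp : ∀ x, φ x = -(C.mulVec x) := by intro x; simp [hφ]
    have key : Set.EqOn f g (Set.Icc 0 T) := by
      apply ODE_solution_unique (v := fun _ x => φ x) (K := ‖φ‖₊)
      · intro _; exact φ.lipschitz
      · exact fun t _ => (hf t).continuousAt.continuousWithinAt
      · intro t _; rw [hφapp]; exact (hf t).hasDerivWithinAt
      · exact fun t _ => (hgd t).continuousAt.continuousWithinAt
      · intro t _; rw [hφapp]; exact (hgd t).hasDerivWithinAt
      · rw [hf0, hg0]
    exact key (Set.mem_Icc.2 ⟨hT, le_rfl⟩)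
  -- the limit
  set L : ℝ := 1 / Real.sqrt (1 - α ^ 2) with hL
  have hpinv : ‖p⁻¹‖ = L := by
    rw [norm_inv, hp1, hL]
    simp [Complex.norm_real, _root_.abs_of_nonneg (Real.sqrt_nonneg _), one_div]
  have hdecomp : ∀ t : ℝ, (Complex.exp ((lam1.re : ℂ) * t)) • e (g t)
      = (p⁻¹ * Complex.exp (((lam1.re : ℂ) - lam1) * t)) • e v1
        - (c * p⁻¹ * Complex.exp (((lam1.re : ℂ) - lam2) * t)) • e v2 := by
    intro t
    rw [hgdef]
    simp only [he, WithLp.equiv_symm_apply, WithLp.toLp_sub, WithLp.toLp_smul]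
    rw [smul_sub, smul_smul, smul_smul]
    have e1 : Complex.exp (((lam1.re : ℂ) - lam1) * t)
        = Complex.exp ((lam1.re : ℂ) * t) * Complex.exp (-(lam1 * t)) := by
      rw [← Complex.exp_add]; ring_nf
    have e2 : Complex.exp (((lam1.re : ℂ) - lam2) * t)
        = Complex.exp ((lam1.re : ℂ) * t) * Complex.exp (-(lam2 * t)) := by
      rw [← Complex.exp_add]; ring_nf
    rw [e1, e2]
    congr 2 <;> ring
  have hXnorm : ∀ t : ℝ,
      ‖(p⁻¹ * Complex.exp (((lam1.re : ℂ) - lam1) * t)) • e v1‖ = L := by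
    intro t
    rw [norm_smul, hV1n, norm_mul, hpinv, Complex.norm_exp]
    have : (((lam1.re : ℂ) - lam1) * t).re = 0 := by simp
    rw [this, Real.exp_zero]
    ring
  have hYnorm : ∀ t : ℝ,
      ‖(c * p⁻¹ * Complex.exp (((lam1.re : ℂ) - lam2) * t)) • e v2‖
        = ‖c * p⁻¹‖ * Real.exp ((lam1.re - lam2.re) * t) := by
    intro t
    rw [norm_smul, hVn, mul_one, norm_mul]
    congr 1
    rw [Complex.norm_exp]
    congr 1
    simp
  have hbound : ∀ t : ℝ, |Real.exp (lam1.re * t) * ‖e (g t)‖ - L|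
      ≤ ‖c * p⁻¹‖ * Real.exp ((lam1.re - lam2.re) * t) := by
    intro t
    have h1 : Real.exp (lam1.re * t) * ‖e (g t)‖
        = ‖(Complex.exp ((lam1.re : ℂ) * t)) • e (g t)‖ := by
      rw [norm_smul, Complex.norm_exp]
      congr 2
      simp
    rw [h1, hdecomp t]
    set X := (p⁻¹ * Complex.exp (((lam1.re : ℂ) - lam1) * t)) • e v1
    set Y := (c * p⁻¹ * Complex.exp (((lam1.re : ℂ) - lam2) * t)) • e v2
    calc |‖X - Y‖ - L| = |‖X - Y‖ - ‖X‖| := by rw [hXnorm t]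
    _ ≤ ‖(X - Y) - X‖ := abs_norm_sub_norm_le _ _
    _ = ‖Y‖ := by rw [sub_sub_cancel_left, norm_neg]
    _ = ‖c * p⁻¹‖ * Real.exp ((lam1.re - lam2.re) * t) := hYnorm t
  have hz : Tendsto (fun t : ℝ => ‖c * p⁻¹‖ * Real.exp ((lam1.re - lam2.re) * t))
      atTop (nhds 0) := by
    have h1 : Tendsto (fun t : ℝ => (lam1.re - lam2.re) * t) atTop atBot :=
      (tendsto_const_mul_atBot_of_neg (by linarith)).2 tendsto_id
    have h2 := Real.tendsto_exp_atBot.comp h1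
    have h3 := h2.const_mul ‖c * p⁻¹‖
    rw [mul_zero] at h3
    exact h3
  have key : Tendsto (fun t : ℝ => Real.exp (lam1.re * t) * ‖e (g t)‖)
      atTop (nhds L) := by
    have h0 : Tendsto (fun t : ℝ => Real.exp (lam1.re * t) * ‖e (g t)‖ - L)
        atTop (nhds 0) := by
      apply squeeze_zero_norm (fun t => ?_) hz
      rw [Real.norm_eq_abs]
      exact hbound t
    have h1 := h0.add_const L
    rw [zero_add] at h1
    exact h1.congr (fun t => by ring)
  have hden : Real.sqrt (∑ i, ‖f 0 i‖ ^ 2) = 1 := by rw [hf0]; exact hwn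
  apply key.congr'
  filter_upwards [eventually_ge_atTop (0 : ℝ)] with t ht
  rw [hden, div_one, hfg t ht, he, norm2_eq']
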